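/- For every n ∈ ℕ there exist a real constant p₀ and real polynomials p₁ and p₂, with deg p₁ ≤ n and deg p₂ ≤ 2n and p₀ = −(p₁(0) + p₂(0)), such that the function y(t) = 1 − exp[−(p₀ + p₁(t)·e^{−t²} + p₂(t)·e^{−2t²})] satisfies y(0) = 0 and y'(t) + g_n(t)·y(t) = g_n(t) for all t, where g_n(t) = (4/√π)·e^{−t²}·f_n(t). -/

import Mathlib

open Real intervalIntegral Polynomial

/-- The error function. -/
noncomputable def erf (x : ℝ) : ℝ :=
  (2 / Real.sqrt π) * ∫ t in (0:ℝ)..x, Real.exp (-t ^ 2)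

/-- The Hermite-type polynomials `p k x`. -/
noncomputable def p : ℕ → ℝ → ℝ
  | 0 => fun _ => 1
  | (k + 1) => fun x => deriv (p k) x - 2 * x * p k x

/-- Spline coefficients `c_{n,k}`. -/
noncomputable def c (n k : ℕ) : ℝ :=
  ((Nat.factorial n : ℝ) / ((Nat.factorial (n - k) : ℝ) * (Nat.factorial (k + 1) : ℝ))) *
    ((Nat.factorial (2 * n + 1 - k) : ℝ) / (2 * (Nat.factorial (2 * n + 1) : ℝ)))

/-- The n-th order spline based approximation to the error function. -/
noncomputable def f (n : ℕ) (x : ℝ) : ℝ :=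
  (2 / Real.sqrt π) * ∑ k ∈ Finset.range (n + 1),
    c n k * x ^ (k + 1) * (p k 0 + (-1 : ℝ) ^ k * p k x * Real.exp (-x ^ 2))

noncomputable def H : ℕ → Polynomial ℝ
  | 0 => 1
  | (k+1) => derivative (H k) - C 2 * X * H k

lemma p_eq (k : ℕ) (x : ℝ) : p k x = (H k).eval x := by
  induction k generalizing x with
  | zero => simp [p, H]
  | succ k ih =>
    have hd : deriv (p k) x = (derivative (H k)).eval x := by
      rw [show p k = fun y => (H k).eval y from funext ih]
      exact Polynomial.deriv _
    simp only [p, H, hd, ih x, eval_sub, eval_mul, eval_C, eval_X]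

lemma H_coeff (k i : ℕ) (h : ¬ Even (i + k)) : (H k).coeff i = 0 := by
  induction k generalizing i with
  | zero =>
    have : i ≠ 0 := by rintro rfl; simp at h
    simp [H, coeff_one, this]
  | succ k ih =>
    have h1 : (derivative (H k)).coeff i = 0 := by
      rw [coeff_derivative, ih (i+1) (by simp [Nat.even_iff] at h ⊢; omega)]
      ring
    have h2 : (X * H k).coeff i = 0 := by
      cases i with
      | zero => simp [mul_coeff_zero]
      | succ j => rw [coeff_X_mul, ih j (by simp [Nat.even_iff] at h ⊢; omega)]
    simp only [H, coeff_sub, h1, mul_assoc, coeff_C_mul, h2]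
    ring

lemma H_natDegree (k : ℕ) : (H k).natDegree ≤ k := by
  induction k with
  | zero => simp [H]
  | succ k ih =>
    have hb : (C (2:ℝ) * X * H k).natDegree ≤ k + 1 := by
      calc (C (2:ℝ) * X * H k).natDegree ≤ (C (2:ℝ) * X).natDegree + (H k).natDegree :=
            natDegree_mul_le
        _ ≤ 1 + k := add_le_add (natDegree_C_mul_X (2:ℝ) two_ne_zero).le ih
        _ = k + 1 := by omega
    have ha : (derivative (H k)).natDegree ≤ k + 1 :=
      le_trans (natDegree_derivative_le _) (by omega)
    simp only [H]
    exact le_trans (natDegree_sub_le _ _) (by omega)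

lemma exists_solution (a : ℝ) (ha : a ≠ 0) :
    ∀ d : ℕ, ∀ q : Polynomial ℝ, q.degree < (d : ℕ) →
    (∀ i, Even i → q.coeff i = 0) →
    ∃ r : Polynomial ℝ, derivative r - C a * X * r = q ∧
      (∀ i, Odd i → r.coeff i = 0) ∧
      ∀ N : ℕ, q.degree ≤ (N + 1 : ℕ) → r.degree ≤ (N : ℕ) := by
  intro d
  induction d with
  | zero =>
    intro q hdeg hq
    have hq0 : q = 0 := by
      rw [← degree_eq_bot]
      exact Nat.WithBot.lt_zero_iff.mp (by exact_mod_cast hdeg)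
    exact ⟨0, by simp [hq0], by simp, by simp⟩
  | succ d IH =>
    intro q hdeg hq
    by_cases hq0 : q = 0
    · exact ⟨0, by simp [hq0], by simp, by simp⟩
    have hd₀ : q.degree = (q.natDegree : ℕ) := degree_eq_natDegree hq0
    have hodd : ¬ Even q.natDegree := by
      intro he
      exact (mt leadingCoeff_eq_zero.mp hq0) (hq _ he)
    obtain ⟨m, hm⟩ : ∃ m, q.natDegree = m + 1 := by
      have hpos : q.natDegree ≠ 0 := fun h0 => hodd (by simp [h0])
      exact ⟨q.natDegree - 1, by omega⟩
    have hmeven : Even m := by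
      rcases Nat.even_or_odd m with he | ho
      · exact he
      · exact absurd (by rw [hm]; exact ho.add_one) hodd
    have hmd : m + 1 ≤ d := by
      have : (q.natDegree : WithBot ℕ) < ((d+1 : ℕ) : WithBot ℕ) := hd₀ ▸ hdeg
      have := Nat.cast_lt.mp this
      omega
    set co := q.coeff (m + 1) with hco
    set b := -co / a with hb
    have hab : a * b = -co := by rw [hb]; field_simp
    set r₀ : Polynomial ℝ := C b * X ^ m with hr₀
    set s : Polynomial ℝ := derivative r₀ - C a * X * r₀ with hs
    have hscoeff : ∀ i, s.coeff i =
        (if i = m - 1 then b * m else 0) - (if i = m + 1 then a * b else 0) := by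
      intro i
      have h1 : derivative r₀ = C (b * m) * X ^ (m - 1) := by
        rw [hr₀, derivative_C_mul_X_pow]
      have h2 : C a * X * r₀ = C (a * b) * X ^ (m + 1) := by
        rw [hr₀, C_mul]; ring
      rw [hs, coeff_sub, h1, h2, coeff_C_mul, coeff_C_mul, coeff_X_pow, coeff_X_pow]
      simp only [mul_ite, mul_one, mul_zero]
    set q' : Polynomial ℝ := q - s with hq'
    have hq'c : ∀ i, Even i → q'.coeff i = 0 := by
      intro i hi
      rw [hq', coeff_sub, hq i hi, hscoeff i]
      have h2 : (if i = m + 1 then a * b else 0) = 0 := by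
        split
        · exfalso
          rcases hmeven with ⟨j, hj⟩
          rcases hi with ⟨l, hl⟩
          omega
        · rfl
      have h1 : (if i = m - 1 then b * (m : ℝ) else 0) = 0 := by
        split
        · rcases Nat.eq_zero_or_pos m with h0 | h0
          · simp [h0]
          · exfalso
            rcases hmeven with ⟨j, hj⟩
            rcases hi with ⟨l, hl⟩
            omega
        · rfl
      rw [h1, h2]; ring
    have htop : ∀ i, m + 1 ≤ i → q'.coeff i = 0 := by
      intro i hi
      rw [hq', coeff_sub, hscoeff i]
      rcases eq_or_lt_of_le hi with heq | hlt
      · rw [← heq]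
        simp only [show ¬ (m+1 = m - 1) by omega, if_false, if_pos rfl, hab, ← hco]
        simp
      · rw [coeff_eq_zero_of_natDegree_lt (by omega : q.natDegree < i)]
        simp only [show ¬ (i = m - 1) by omega, show ¬ (i = m + 1) by omega, if_false]
        ring
    have hdeg' : q'.degree < ((m + 1 : ℕ) : WithBot ℕ) :=
      (degree_lt_iff_coeff_zero _ _).mpr (fun i hi => htop i (by exact_mod_cast hi))
    obtain ⟨r', hr'1, hr'2, hr'3⟩ := IH q'
      (lt_of_lt_of_le hdeg' (by exact_mod_cast hmd)) hq'c
    refine ⟨r₀ + r', ?_, ?_, ?_⟩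
    · rw [derivative_add]
      have : derivative r₀ + derivative r' - C a * X * (r₀ + r') =
          (derivative r₀ - C a * X * r₀) + (derivative r' - C a * X * r') := by ring
      rw [this, hr'1, ← hs, hq']
      ring
    · intro i hi
      rw [coeff_add, hr'2 i hi, hr₀, coeff_C_mul, coeff_X_pow]
      have : ¬ (i = m) := by rintro rfl; exact (Nat.not_odd_iff_even.mpr hmeven) hi
      simp [this]
    · intro N hN
      have hmN : m ≤ N := by
        have : ((m + 1 : ℕ) : WithBot ℕ) ≤ ((N + 1 : ℕ) : WithBot ℕ) := by
          rw [← hm, ← hd₀]; exact hN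
        have := Nat.cast_le.mp this
        omega
      refine le_trans (degree_add_le _ _) (max_le ?_ ?_)
      · exact le_trans (degree_C_mul_X_pow_le m b) (by exact_mod_cast hmN)
      · exact hr'3 N (le_of_lt (lt_of_lt_of_le hdeg' (by exact_mod_cast (by omega : m + 1 ≤ N + 1))))


/-- For each `n` there are a constant `p₀` and polynomials `p₁, p₂`, with
`deg p₁ ≤ n`, `deg p₂ ≤ 2n`, `p₀ = −(p₁(0)+p₂(0))`, such that
`y(t) = 1 − exp[−(p₀ + p₁(t) e^{−t²} + p₂(t) e^{−2t²})]` satisfies `y(0) = 0` and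
`y' + gₙ·y = gₙ` where `gₙ(t) = (4/√π) e^{−t²} fₙ(t)`. -/
theorem exists_ode_solution_spline (n : ℕ) :
    ∃ (p₀ : ℝ) (p₁ p₂ : Polynomial ℝ),
      p₁.degree ≤ (n : ℕ) ∧ p₂.degree ≤ (2 * n : ℕ) ∧
      p₀ = -(p₁.eval 0 + p₂.eval 0) ∧
      (fun t : ℝ =>
          1 - Real.exp (-(p₀ + p₁.eval t * Real.exp (-t ^ 2) +
            p₂.eval t * Real.exp (-2 * t ^ 2)))) 0 = 0 ∧
      ∀ t : ℝ, HasDerivAt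
        (fun t : ℝ =>
          1 - Real.exp (-(p₀ + p₁.eval t * Real.exp (-t ^ 2) +
            p₂.eval t * Real.exp (-2 * t ^ 2))))
        ((4 / Real.sqrt π) * Real.exp (-t ^ 2) * f n t -
          (4 / Real.sqrt π) * Real.exp (-t ^ 2) * f n t *
            (1 - Real.exp (-(p₀ + p₁.eval t * Real.exp (-t ^ 2) +
              p₂.eval t * Real.exp (-2 * t ^ 2))))) t := by
  have hs : Real.sqrt π ≠ 0 := ne_of_gt (Real.sqrt_pos.mpr pi_pos)
  set A : Polynomial ℝ := ∑ k ∈ Finset.range (n + 1),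
    C (8 / (Real.sqrt π * Real.sqrt π) * c n k * (H k).eval 0) * X ^ (k + 1) with hAdef
  set B : Polynomial ℝ := ∑ k ∈ Finset.range (n + 1),
    C (8 / (Real.sqrt π * Real.sqrt π) * (-1 : ℝ) ^ k * c n k) * (H k * X ^ (k + 1)) with hBdef
  have hAq : ∀ i, Even i → A.coeff i = 0 := by
    intro i hi
    rw [hAdef, finset_sum_coeff]
    refine Finset.sum_eq_zero fun k _ => ?_
    rw [coeff_C_mul, coeff_X_pow]
    by_cases hik : i = k + 1
    · have : (H k).eval 0 = 0 := by
        rw [← coeff_zero_eq_eval_zero]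
        refine H_coeff k 0 ?_
        rcases hi with ⟨l, hl⟩
        simp [Nat.even_iff]; omega
      simp [this]
    · simp [hik]
  have hBq : ∀ i, Even i → B.coeff i = 0 := by
    intro i hi
    rw [hBdef, finset_sum_coeff]
    refine Finset.sum_eq_zero fun k _ => ?_
    rw [coeff_C_mul, coeff_mul_X_pow']
    split
    · rw [H_coeff k (i - (k+1)) ?_, mul_zero]
      rcases hi with ⟨l, hl⟩
      simp only [Nat.even_iff] at *
      omega
    · rw [mul_zero]
  have hAdeg : A.degree ≤ ((n + 1 : ℕ) : WithBot ℕ) := by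
    rw [hAdef]
    refine le_trans (degree_sum_le _ _) (Finset.sup_le fun k hk => ?_)
    refine le_trans (degree_C_mul_X_pow_le _ _) ?_
    exact_mod_cast Nat.succ_le_succ (Nat.lt_succ_iff.mp (Finset.mem_range.mp hk))
  have hBdeg : B.degree ≤ ((2 * n + 1 : ℕ) : WithBot ℕ) := by
    rw [hBdef]
    refine le_trans (degree_sum_le _ _) (Finset.sup_le fun k hk => ?_)
    have hk' : k ≤ n := Nat.lt_succ_iff.mp (Finset.mem_range.mp hk)
    refine natDegree_le_iff_degree_le.mp ?_
    calc (C (8 / (Real.sqrt π * Real.sqrt π) * (-1 : ℝ) ^ k * c n k) * (H k * X ^ (k + 1))).natDegree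
        ≤ (C (8 / (Real.sqrt π * Real.sqrt π) * (-1 : ℝ) ^ k * c n k)).natDegree
          + (H k * X ^ (k + 1)).natDegree := natDegree_mul_le
      _ ≤ 0 + ((H k).natDegree + (X ^ (k+1) : Polynomial ℝ).natDegree) := by
          exact add_le_add (le_of_eq (natDegree_C _)) natDegree_mul_le
      _ ≤ 2 * n + 1 := by
          have h1 := H_natDegree k
          have h2 : (X ^ (k+1) : Polynomial ℝ).natDegree = k + 1 := natDegree_X_pow _
          omega
  obtain ⟨r₁, hr₁, -, hr₁deg⟩ := exists_solution 2 two_ne_zero (n + 2) A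
    (lt_of_le_of_lt hAdeg (by exact_mod_cast Nat.lt_succ_self _)) hAq
  obtain ⟨r₂, hr₂, -, hr₂deg⟩ := exists_solution 4 four_ne_zero (2 * n + 2) B
    (lt_of_le_of_lt hBdeg (by exact_mod_cast Nat.lt_succ_self _)) hBq
  refine ⟨-(r₁.eval 0 + r₂.eval 0), r₁, r₂, hr₁deg n hAdeg, hr₂deg (2 * n) hBdeg, rfl, ?_, ?_⟩
  · norm_num
  · intro t
    have hπ : Real.sqrt π * Real.sqrt π = π := Real.mul_self_sqrt pi_pos.le
    have hE : Real.exp (-2 * t ^ 2) = Real.exp (-t ^ 2) * Real.exp (-t ^ 2) := by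
      rw [← Real.exp_add]; ring_nf
    have key : A.eval t * Real.exp (-t ^ 2) + B.eval t * Real.exp (-2 * t ^ 2)
        = (4 / Real.sqrt π) * Real.exp (-t ^ 2) * f n t := by
      simp only [f, p_eq, hAdef, hBdef, eval_finset_sum, eval_mul, eval_C, eval_pow, eval_X,
        Finset.mul_sum, Finset.sum_mul]
      rw [← Finset.sum_add_distrib]
      refine Finset.sum_congr rfl fun k _ => ?_
      rw [hE]
      field_simp
      ring
    have eA : A.eval t = (derivative r₁).eval t - 2 * t * r₁.eval t := by
      rw [← hr₁]; simp
    have eB : B.eval t = (derivative r₂).eval t - 4 * t * r₂.eval t := by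
      rw [← hr₂]; simp
    have hE1 : HasDerivAt (fun t : ℝ => Real.exp (-t ^ 2))
        (Real.exp (-t ^ 2) * -((2:ℕ) * t ^ 1)) t := ((hasDerivAt_pow 2 t).neg).exp
    have hE2 : HasDerivAt (fun t : ℝ => Real.exp (-2 * t ^ 2))
        (Real.exp (-2 * t ^ 2) * (-2 * ((2:ℕ) * t ^ 1))) t :=
      (((hasDerivAt_pow 2 t).const_mul (-2 : ℝ)).exp)
    have hF := ((((r₁.hasDerivAt t).mul hE1).const_add
      (-(r₁.eval 0 + r₂.eval 0))).add ((r₂.hasDerivAt t).mul hE2))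
    have hy := (hF.neg.exp).const_sub 1
    refine hy.congr_deriv ?_
    have hDg : (derivative r₁).eval t * Real.exp (-t ^ 2)
          + r₁.eval t * (Real.exp (-t ^ 2) * -((2:ℕ) * t ^ 1))
          + ((derivative r₂).eval t * Real.exp (-2 * t ^ 2)
          + r₂.eval t * (Real.exp (-2 * t ^ 2) * (-2 * ((2:ℕ) * t ^ 1))))
        = (4 / Real.sqrt π) * Real.exp (-t ^ 2) * f n t := by
      rw [← key, eA, eB]
      push_cast
      ring
    rw [← hDg]
    simp only [Pi.add_apply, Pi.mul_apply, Pi.neg_apply]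
    push_cast
    ring
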